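/- Under the hypotheses of the fully accelerated LDPD with μ_g > 0 and the parameter choices τ = 3/μ_g, τ_t = τ/t, η_t = t/(2L_f + τ‖A‖²), if (x*, y*) is a saddle point of L, then ‖ȳ_{k+1} − y*‖² ≤ (2/(μ_g k(k+1)))[(2L_f + τ‖A‖²)‖x* − x_1‖² + ‖y* − y_1‖²/τ], i.e. ‖ȳ_{k+1} − y*‖ = O(1/k). -/

import Mathlib

open scoped RealInnerProductSpace

section Helpers
variable {G : Type*} [NormedAddCommGroup G] [InnerProductSpace ℝ G]

lemma ldpd_three_point (a b c : G) :
    2 * ⟪a - b, b - c⟫ = ‖a - c‖ ^ 2 - ‖a - b‖ ^ 2 - ‖b - c‖ ^ 2 := by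
  simp only [← real_inner_self_eq_norm_sq, inner_sub_left, inner_sub_right]
  rw [real_inner_comm a b, real_inner_comm a c, real_inner_comm b c]
  ring

lemma ldpd_quad_comb (u v c : G) (a b : ℝ) (hab : a + b = 1) :
    ‖a • u + b • v - c‖ ^ 2 = a * ‖u - c‖ ^ 2 + b * ‖v - c‖ ^ 2 - a * b * ‖u - v‖ ^ 2 := by
  have hb : b = 1 - a := by linarith
  subst hb
  simp only [← real_inner_self_eq_norm_sq, inner_sub_left, inner_sub_right, inner_add_left,
    inner_add_right, real_inner_smul_left, real_inner_smul_right]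
  rw [real_inner_comm u v, real_inner_comm u c, real_inner_comm v c]
  ring

lemma ldpd_shift (p q r : G) (s : ℝ) :
    ‖p - (q + s • r)‖ ^ 2 = ‖p - q‖ ^ 2 - 2 * s * ⟪r, p - q⟫ + s ^ 2 * ‖r‖ ^ 2 := by
  simp only [← real_inner_self_eq_norm_sq, inner_sub_left, inner_sub_right, inner_add_left,
    inner_add_right, real_inner_smul_left, real_inner_smul_right]
  rw [real_inner_comm p q, real_inner_comm p r, real_inner_comm q r]
  ring

lemma ldpd_strong_min (φ : G → ℝ) (m : ℝ)
    (hconv : ∀ u v : G, ∀ a b : ℝ, 0 ≤ a → 0 ≤ b → a + b = 1 →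
      φ (a • u + b • v) ≤ a * φ u + b * φ v - a * b * (m / 2 * ‖u - v‖ ^ 2))
    (w : G) (hw : ∀ z, φ w ≤ φ z) (z : G) : φ w + m / 2 * ‖z - w‖ ^ 2 ≤ φ z := by
  have key : ∀ a : ℝ, 0 < a → a < 1 → m / 2 * ‖z - w‖ ^ 2 * (1 - a) ≤ φ z - φ w := by
    intro a ha ha1
    have h1 := hconv z w a (1 - a) ha.le (by linarith) (by ring)
    have h2 := hw (a • z + (1 - a) • w)
    nlinarith
  have lim : Filter.Tendsto (fun a : ℝ => m / 2 * ‖z - w‖ ^ 2 * (1 - a)) (nhdsWithin 0 (Set.Ioi 0))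
      (nhds (m / 2 * ‖z - w‖ ^ 2 * (1 - 0))) :=
    Filter.Tendsto.mono_left (Continuous.tendsto (by continuity) 0) nhdsWithin_le_nhds
  have hmem : Set.Ioo (0:ℝ) 1 ∈ nhdsWithin (0:ℝ) (Set.Ioi 0) := by
    rw [show Set.Ioo (0:ℝ) 1 = Set.Ioi 0 ∩ Set.Iio 1 from rfl]
    exact Filter.inter_mem self_mem_nhdsWithin (mem_nhdsWithin_of_mem_nhds (Iio_mem_nhds one_pos))
  have := le_of_tendsto lim (Filter.eventually_of_mem hmem (fun a ha => key a ha.1 ha.2))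
  linarith

lemma ldpd_opnorm_inner {E F : Type*} [NormedAddCommGroup E] [InnerProductSpace ℝ E]
    [NormedAddCommGroup F] [InnerProductSpace ℝ F] (A : E →L[ℝ] F) (u : E) (v : F) :
    -( ‖A‖ * ‖u‖ * ‖v‖) ≤ ⟪A u, v⟫ ∧ ⟪A u, v⟫ ≤ ‖A‖ * ‖u‖ * ‖v‖ := by
  have h1 := abs_real_inner_le_norm (A u) v
  have h2 : ‖A u‖ * ‖v‖ ≤ ‖A‖ * ‖u‖ * ‖v‖ :=
    mul_le_mul_of_nonneg_right (A.le_opNorm u) (norm_nonneg v)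
  have := abs_le.mp h1
  constructor <;> nlinarith [abs_nonneg (⟪A u, v⟫)]

lemma ldpd_mono_down (W : ℕ → ℝ) (h : ∀ t, 1 ≤ t → W (t + 1) ≤ W t) :
    ∀ k, 1 ≤ k → W k ≤ W 1 := by
  intro k hk
  induction k, hk using Nat.le_induction with
  | base => exact le_refl _
  | succ n hn ih => exact (h n hn).trans ih

end Helpers

set_option maxHeartbeats 4000000 in
theorem stmt15 {E F : Type*} [NormedAddCommGroup E] [InnerProductSpace ℝ E] [CompleteSpace E]
    [NormedAddCommGroup F] [InnerProductSpace ℝ F] [CompleteSpace F]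
    (f : E → ℝ) (f' : E → E) (g : F → ℝ) (A : E →L[ℝ] F)
    (Lf μg : ℝ) (hLf : 0 ≤ Lf) (hμg : 0 < μg)
    (hsmooth : ∀ u v, f u ≤ f v + ⟪f' v, u - v⟫ + Lf / 2 * ‖u - v‖ ^ 2)
    (hfconv : ∀ u v, f v + ⟪f' v, u - v⟫ ≤ f u)
    (hg : StrongConvexOn Set.univ μg g)
    (θ α τt η : ℕ → ℝ) (τ : ℝ)
    (hθ : ∀ t, θ t = 2 / ((t : ℝ) + 1)) (hα : ∀ t, α t = ((t : ℝ) - 1) / t)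
    (hτ : τ = 3 / μg) (hτt : ∀ t, τt t = τ / t)
    (hη : ∀ t, η t = (t : ℝ) / (2 * Lf + τ * ‖A‖ ^ 2))
    (x xb xh : ℕ → E) (y yb yh : ℕ → F)
    (hy0 : y 0 = y 1) (hxb1 : xb 1 = x 1) (hyb1 : yb 1 = y 1)
    (hxh : ∀ t ≥ 1, xh t = (1 - θ t) • xb t + θ t • x t)
    (hx : ∀ t ≥ 1, x (t + 1) =
      x t - η t • (f' (xh t) + (ContinuousLinearMap.adjoint A) (yh t)))
    (hxb : ∀ t ≥ 1, xb (t + 1) = (1 - θ t) • xb t + θ t • x (t + 1))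
    (hy : ∀ t ≥ 1, ∀ z,
      ‖y (t + 1) - (y t + τt t • A (x (t + 1)))‖ ^ 2 / (2 * τt t) + g (y (t + 1)) ≤
      ‖z - (y t + τt t • A (x (t + 1)))‖ ^ 2 / (2 * τt t) + g z)
    (hyh : ∀ t ≥ 1, yh t = α t • (y t - y (t - 1)) + y t)
    (hyb : ∀ t ≥ 1, yb (t + 1) = (1 - θ t) • yb t + θ t • y (t + 1))
    (L : E → F → ℝ) (hL : ∀ u v, L u v = f u + ⟪A u, v⟫ - g v)
    (xs : E) (ys : F)
    (hsaddle : ∀ (x' : E) (y' : F), L xs y' ≤ L xs ys ∧ L xs ys ≤ L x' ys) :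
    ∀ k : ℕ, 1 ≤ k →
      ‖yb (k + 1) - ys‖ ^ 2 ≤
        2 / (μg * (k : ℝ) * (k + 1)) *
          ((2 * Lf + τ * ‖A‖ ^ 2) * ‖xs - x 1‖ ^ 2 + ‖ys - y 1‖ ^ 2 / τ) := by
  intro k hk
  have hτpos : 0 < τ := by rw [hτ]; positivity
  have hμτ : τ * μg = 3 := by rw [hτ]; field_simp
  -- raw strong convexity of g
  have gstrong : ∀ (u v : F) (a b : ℝ), 0 ≤ a → 0 ≤ b → a + b = 1 →
      g (a • u + b • v) ≤ a * g u + b * g v - a * b * (μg / 2 * ‖u - v‖ ^ 2) := by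
    intro u v a b ha hb hab
    have := hg.2 (Set.mem_univ u) (Set.mem_univ v) ha hb hab
    simpa [smul_eq_mul] using this
  -- strong convexity at the saddle point
  have hsc : ∀ z, μg / 2 * ‖z - ys‖ ^ 2 ≤ L xs ys - L xs z := by
    intro z
    set φ := fun v : F => g v - ⟪A xs, v⟫ with hφ
    have hconv : ∀ u v : F, ∀ a b : ℝ, 0 ≤ a → 0 ≤ b → a + b = 1 →
        φ (a • u + b • v) ≤ a * φ u + b * φ v - a * b * (μg / 2 * ‖u - v‖ ^ 2) := by
      intro u v a b ha hb hab
      have h1 := gstrong u v a b ha hb hab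
      simp only [hφ, inner_add_right, real_inner_smul_right]
      linarith
    have hw : ∀ z', φ ys ≤ φ z' := by
      intro z'
      have := (hsaddle xs z').1
      rw [hL, hL] at this
      simp only [hφ]
      linarith
    have h := ldpd_strong_min φ μg hconv ys hw z
    rw [hL, hL]
    simp only [hφ] at h
    linarith
  -- dual prox inequality
  have hdual : ∀ t : ℕ, 1 ≤ t →
      2 * τ * (t : ℝ) * (g (y (t + 1)) - g ys) ≤
        (t : ℝ) ^ 2 * ‖ys - y t‖ ^ 2 - (t : ℝ) ^ 2 * ‖y (t + 1) - y t‖ ^ 2 -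
          ((t : ℝ) ^ 2 + 3 * (t : ℝ)) * ‖ys - y (t + 1)‖ ^ 2 -
          2 * τ * (t : ℝ) * ⟪A (x (t + 1)), ys - y (t + 1)⟫ := by
    intro t ht
    have hT : (1 : ℝ) ≤ (t : ℝ) := by exact_mod_cast ht
    have hTpos : (0 : ℝ) < (t : ℝ) := by linarith
    have hT0 : ((t : ℝ)) ≠ 0 := hTpos.ne'
    have hτ0 : τ ≠ 0 := hτpos.ne'
    have hτtv : τt t = τ / (t : ℝ) := hτt t
    have hτtpos : 0 < τt t := by rw [hτtv]; positivity
    set c := y t + τt t • A (x (t + 1)) with hc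
    set φ := fun z : F => ‖z - c‖ ^ 2 / (2 * τt t) + g z with hφ
    have hconv : ∀ u v : F, ∀ a b : ℝ, 0 ≤ a → 0 ≤ b → a + b = 1 →
        φ (a • u + b • v) ≤ a * φ u + b * φ v -
          a * b * ((1 / τt t + μg) / 2 * ‖u - v‖ ^ 2) := by
      intro u v a b ha hb hab
      have hq := ldpd_quad_comb u v c a b hab
      have hgq := gstrong u v a b ha hb hab
      simp only [hφ]
      rw [hq]
      have h2 : (a * ‖u - c‖ ^ 2 + b * ‖v - c‖ ^ 2 - a * b * ‖u - v‖ ^ 2) / (2 * τt t)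
          = a * (‖u - c‖ ^ 2 / (2 * τt t)) + b * (‖v - c‖ ^ 2 / (2 * τt t))
            - a * b * (1 / τt t / 2 * ‖u - v‖ ^ 2) := by
        field_simp
      rw [h2]
      have h3 : a * b * ((1 / τt t + μg) / 2 * ‖u - v‖ ^ 2)
          = a * b * (1 / τt t / 2 * ‖u - v‖ ^ 2) + a * b * (μg / 2 * ‖u - v‖ ^ 2) := by ring
      linarith
    have hmin := ldpd_strong_min φ (1 / τt t + μg) hconv (y (t + 1))
      (fun z => by simpa [hφ, hc] using hy t ht z) ys
    have e1 := ldpd_shift ys (y t) (A (x (t + 1))) (τt t)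
    have e2 := ldpd_shift (y (t + 1)) (y t) (A (x (t + 1))) (τt t)
    rw [← hc] at e1 e2
    have e3 : ⟪A (x (t + 1)), ys - y t⟫ - ⟪A (x (t + 1)), y (t + 1) - y t⟫
        = ⟪A (x (t + 1)), ys - y (t + 1)⟫ := by
      simp only [inner_sub_right]; ring
    simp only [hφ] at hmin
    rw [e1, e2] at hmin
    rw [hτtv] at hmin
    have hmin2 := mul_le_mul_of_nonneg_left hmin
      (show (0:ℝ) ≤ 2 * τ * (t : ℝ) by positivity)
    have eL : 2 * τ * (t : ℝ) * ((‖y (t + 1) - y t‖ ^ 2 - 2 * τ / (t:ℝ) *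
          ⟪A (x (t + 1)), y (t + 1) - y t⟫ + (τ / (t:ℝ)) ^ 2 * ‖A (x (t + 1))‖ ^ 2) / (2 * (τ / (t:ℝ)))
          + g (y (t + 1)) + (1 / (τ / (t:ℝ)) + μg) / 2 * ‖ys - y (t + 1)‖ ^ 2)
        = (t:ℝ) ^ 2 * ‖y (t + 1) - y t‖ ^ 2 - 2 * τ * (t:ℝ) * ⟪A (x (t + 1)), y (t + 1) - y t⟫
          + τ ^ 2 * ‖A (x (t + 1))‖ ^ 2 + 2 * τ * (t:ℝ) * g (y (t + 1))
          + ((t:ℝ) ^ 2 + τ * μg * (t:ℝ)) * ‖ys - y (t + 1)‖ ^ 2 := by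
      field_simp
    have eR : 2 * τ * (t : ℝ) * ((‖ys - y t‖ ^ 2 - 2 * τ / (t:ℝ) * ⟪A (x (t + 1)), ys - y t⟫
          + (τ / (t:ℝ)) ^ 2 * ‖A (x (t + 1))‖ ^ 2) / (2 * (τ / (t:ℝ))) + g ys)
        = (t:ℝ) ^ 2 * ‖ys - y t‖ ^ 2 - 2 * τ * (t:ℝ) * ⟪A (x (t + 1)), ys - y t⟫
          + τ ^ 2 * ‖A (x (t + 1))‖ ^ 2 + 2 * τ * (t:ℝ) * g ys := by
      field_simp
    rw [show 2 * τ / (t:ℝ) = 2 * (τ / (t:ℝ)) by ring] at eL eR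
    rw [eL, eR] at hmin2
    rw [hμτ] at hmin2
    have e3' : 2 * τ * (t:ℝ) * (⟪A (x (t + 1)), ys - y t⟫ - ⟪A (x (t + 1)), y (t + 1) - y t⟫)
        = 2 * τ * (t:ℝ) * ⟪A (x (t + 1)), ys - y (t + 1)⟫ := by rw [e3]
    linarith
  -- averaging inequality for g
  have hgavg : ∀ t : ℕ, 1 ≤ t →
      τ * (t : ℝ) * ((t : ℝ) + 1) * g (yb (t + 1)) ≤
        τ * (t : ℝ) * ((t : ℝ) - 1) * g (yb t) + 2 * τ * (t : ℝ) * g (y (t + 1)) := by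
    intro t ht
    have hT : (1 : ℝ) ≤ (t : ℝ) := by exact_mod_cast ht
    have hT1 : (0 : ℝ) < (t : ℝ) + 1 := by linarith
    have hθt : θ t = 2 / ((t : ℝ) + 1) := hθ t
    have hθnn : 0 ≤ θ t := by rw [hθt]; positivity
    have hθle : θ t ≤ 1 := by rw [hθt, div_le_one hT1]; linarith
    have h := gstrong (yb t) (y (t + 1)) (1 - θ t) (θ t) (by linarith) hθnn (by ring)
    rw [← hyb t ht] at h
    have hnn : 0 ≤ (1 - θ t) * θ t * (μg / 2 * ‖yb t - y (t + 1)‖ ^ 2) := by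
      apply mul_nonneg (mul_nonneg (by linarith) hθnn)
      positivity
    have hdrop : g (yb (t + 1)) ≤ (1 - θ t) * g (yb t) + θ t * g (y (t + 1)) := by linarith
    calc τ * (t : ℝ) * ((t : ℝ) + 1) * g (yb (t + 1))
        = (τ * ((t : ℝ) * ((t : ℝ) + 1))) * g (yb (t + 1)) := by ring
      _ ≤ (τ * ((t : ℝ) * ((t : ℝ) + 1))) * ((1 - θ t) * g (yb t) + θ t * g (y (t + 1))) := by
          apply mul_le_mul_of_nonneg_left hdrop
          have : (0:ℝ) ≤ (t : ℝ) := by linarith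
          positivity
      _ = τ * (t : ℝ) * ((t : ℝ) - 1) * g (yb t) + 2 * τ * (t : ℝ) * g (y (t + 1)) := by
          rw [hθt]
          field_simp
          ring
  have hK : (1 : ℝ) ≤ (k : ℝ) := by exact_mod_cast hk
  have hKpos : (0 : ℝ) < (k : ℝ) := by linarith
  have hden : 0 < μg * (k : ℝ) * ((k : ℝ) + 1) := by positivity
  by_cases hC : 2 * Lf + τ * ‖A‖ ^ 2 = 0
  · -- degenerate case : A = 0, Lf = 0
    have hnA : ‖A‖ ^ 2 = 0 := by nlinarith [sq_nonneg ‖A‖, norm_nonneg A]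
    have hA0 : A = 0 := by
      rw [pow_eq_zero_iff (two_ne_zero)] at hnA
      exact norm_eq_zero.mp hnA
    set Vf : ℕ → ℝ := fun n => τ * n * ((n : ℝ) - 1) * (g (yb n) - g ys)
      + (n : ℝ) ^ 2 * ‖ys - y n‖ ^ 2 with hVf
    have hstep : ∀ t, 1 ≤ t → Vf (t + 1) ≤ Vf t := by
      intro t ht
      have hT : (1 : ℝ) ≤ (t : ℝ) := by exact_mod_cast ht
      have hd := hdual t ht
      have h0 : ⟪A (x (t + 1)), ys - y (t + 1)⟫ = (0:ℝ) := by
        rw [hA0]; simp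
      rw [h0] at hd
      have hga := hgavg t ht
      have hb1 : (0:ℝ) ≤ ‖ys - y (t+1)‖ ^ 2 := by positivity
      have hb2 : (0:ℝ) ≤ ‖y (t+1) - y t‖ ^ 2 := by positivity
      have hE1 : ((t:ℝ) + 1) ^ 2 * ‖ys - y (t+1)‖ ^ 2
          ≤ ((t:ℝ) ^ 2 + 3 * (t:ℝ)) * ‖ys - y (t+1)‖ ^ 2 :=
        mul_le_mul_of_nonneg_right (by nlinarith) hb1
      have hdy : (0:ℝ) ≤ (t:ℝ) ^ 2 * ‖y (t+1) - y t‖ ^ 2 := by positivity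
      simp only [hVf]
      push_cast
      linarith [hga, hd, hE1, hdy]
    have hbase := ldpd_mono_down Vf hstep (k + 1) (by omega)
    have hV1 : Vf 1 = ‖ys - y 1‖ ^ 2 := by simp [hVf]
    have hQ : μg / 2 * ‖yb (k + 1) - ys‖ ^ 2 ≤ g (yb (k + 1)) - g ys := by
      have h := hsc (yb (k + 1))
      rw [hL, hL, hA0] at h
      simpa using h
    have hVk : Vf (k + 1) = τ * ((k:ℝ) + 1) * (k : ℝ) * (g (yb (k + 1)) - g ys)
        + ((k : ℝ) + 1) ^ 2 * ‖ys - y (k + 1)‖ ^ 2 := by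
      simp only [hVf]; push_cast; ring
    have hchain : τ * (k:ℝ) * ((k:ℝ) + 1) * (μg / 2 * ‖yb (k + 1) - ys‖ ^ 2)
        ≤ τ * (2 * Lf + τ * ‖A‖ ^ 2) * ‖xs - x 1‖ ^ 2 + ‖ys - y 1‖ ^ 2 := by
      have hs1 : τ * (k:ℝ) * ((k:ℝ) + 1) * (μg / 2 * ‖yb (k + 1) - ys‖ ^ 2)
          ≤ τ * (k:ℝ) * ((k:ℝ) + 1) * (g (yb (k + 1)) - g ys) :=
        mul_le_mul_of_nonneg_left hQ (by positivity)
      have hnn : (0:ℝ) ≤ ((k : ℝ) + 1) ^ 2 * ‖ys - y (k + 1)‖ ^ 2 := by positivity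
      rw [hC]
      rw [hVk, hV1] at hbase
      linarith [hs1, hnn, hbase]
    rw [div_mul_eq_mul_div, le_div_iff₀ hden]
    have hexp : 2 * ((2 * Lf + τ * ‖A‖ ^ 2) * ‖xs - x 1‖ ^ 2 + ‖ys - y 1‖ ^ 2 / τ)
        = (2 / τ) * (τ * (2 * Lf + τ * ‖A‖ ^ 2) * ‖xs - x 1‖ ^ 2 + ‖ys - y 1‖ ^ 2) := by
      field_simp
    have hexp2 : ‖yb (k + 1) - ys‖ ^ 2 * (μg * (k:ℝ) * ((k:ℝ) + 1))
        = (2 / τ) * (τ * (k:ℝ) * ((k:ℝ) + 1) * (μg / 2 * ‖yb (k + 1) - ys‖ ^ 2)) := by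
      field_simp
    rw [hexp, hexp2]
    exact mul_le_mul_of_nonneg_left hchain (by positivity)
  · -- main case
    have hCpos : 0 < 2 * Lf + τ * ‖A‖ ^ 2 := lt_of_le_of_ne (by positivity) (Ne.symm hC)
    set Cv := 2 * Lf + τ * ‖A‖ ^ 2 with hCv
    have hCne : Cv ≠ 0 := hCpos.ne'
    set Wf : ℕ → ℝ := fun n => τ * (n : ℝ) * ((n : ℝ) - 1) *
        (f (xb n) + ⟪A (xb n), ys⟫ - g ys - f xs - ⟪A xs, yb n⟫ + g (yb n))
      + τ * Cv * ‖xs - x n‖ ^ 2 + (n : ℝ) ^ 2 * ‖ys - y n‖ ^ 2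
      + ((n : ℝ) - 1) ^ 2 * ‖y n - y (n - 1)‖ ^ 2
      - 2 * τ * ((n : ℝ) - 1) * ⟪A (x n - xs), y n - y (n - 1)⟫ with hWf
    have hstep : ∀ t, 1 ≤ t → Wf (t + 1) ≤ Wf t := by
      intro t ht
      have hT : (1 : ℝ) ≤ (t : ℝ) := by exact_mod_cast ht
      have hTpos : (0 : ℝ) < (t : ℝ) := by linarith
      have hT0 : ((t : ℝ)) ≠ 0 := hTpos.ne'
      have hT1pos : (0 : ℝ) < (t : ℝ) + 1 := by linarith
      have hT1ne : ((t : ℝ) + 1) ≠ 0 := hT1pos.ne'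
      have hθt : θ t = 2 / ((t : ℝ) + 1) := hθ t
      have hθnn : 0 ≤ θ t := by rw [hθt]; positivity
      have hθle : θ t ≤ 1 := by rw [hθt, div_le_one hT1pos]; linarith
      -- (I1) smoothness / convexity combination for f
      have hf1 := hsmooth (xb (t + 1)) (xh t)
      have hvec1 : xb (t + 1) - xh t = θ t • (x (t + 1) - x t) := by
        rw [hxb t ht, hxh t ht]; module
      have hvec2 : xb (t + 1) - xh t = (1 - θ t) • (xb t - xh t) + θ t • (xs - xh t)
          + θ t • (x (t + 1) - xs) := by
        rw [hxb t ht, hxh t ht]; module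
      have hnorm1 : ‖xb (t + 1) - xh t‖ ^ 2 = θ t ^ 2 * ‖x (t + 1) - x t‖ ^ 2 := by
        rw [hvec1, norm_smul]
        simp [mul_pow, sq_abs]
      have hinner1 : ⟪f' (xh t), xb (t + 1) - xh t⟫
          = (1 - θ t) * ⟪f' (xh t), xb t - xh t⟫ + θ t * ⟪f' (xh t), xs - xh t⟫
            + θ t * ⟪f' (xh t), x (t + 1) - xs⟫ := by
        rw [hvec2]
        simp [inner_add_right, real_inner_smul_right]
      rw [hnorm1, hinner1] at hf1
      have hf2' := mul_le_mul_of_nonneg_left (hfconv (xb t) (xh t))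
        (show (0:ℝ) ≤ 1 - θ t by linarith)
      have hf3' := mul_le_mul_of_nonneg_left (hfconv xs (xh t)) hθnn
      have hAcomb : f (xb (t + 1)) ≤ (1 - θ t) * f (xb t) + θ t * f xs
          + θ t * ⟪f' (xh t), x (t + 1) - xs⟫
          + Lf / 2 * (θ t ^ 2 * ‖x (t + 1) - x t‖ ^ 2) := by linarith only [hf1, hf2', hf3']
      have hTθ : (t : ℝ) * θ t ≤ 2 := by
        rw [hθt, ← mul_div_assoc, div_le_iff₀ hT1pos]; linarith
      have hscale : (0:ℝ) ≤ τ * ((t : ℝ) * ((t : ℝ) + 1)) := by positivity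
      have hA' := mul_le_mul_of_nonneg_left hAcomb hscale
      have hmid : τ * ((t : ℝ) * ((t : ℝ) + 1)) * ((1 - θ t) * f (xb t) + θ t * f xs
            + θ t * ⟪f' (xh t), x (t + 1) - xs⟫
            + Lf / 2 * (θ t ^ 2 * ‖x (t + 1) - x t‖ ^ 2))
          = τ * (t : ℝ) * ((t : ℝ) - 1) * f (xb t) + 2 * τ * (t : ℝ) * f xs
            + 2 * τ * (t : ℝ) * ⟪f' (xh t), x (t + 1) - xs⟫
            + τ * Lf * ((t : ℝ) * θ t) * ‖x (t + 1) - x t‖ ^ 2 := by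
        rw [hθt]; field_simp; ring
      have hlast : τ * Lf * ((t : ℝ) * θ t) * ‖x (t + 1) - x t‖ ^ 2
          ≤ 2 * τ * Lf * ‖x (t + 1) - x t‖ ^ 2 := by
        have h2 : (0:ℝ) ≤ τ * Lf * ‖x (t + 1) - x t‖ ^ 2 := by positivity
        nlinarith only [hTθ, h2]
      have I1 : τ * (t : ℝ) * ((t : ℝ) + 1) * f (xb (t + 1))
          ≤ τ * (t : ℝ) * ((t : ℝ) - 1) * f (xb t) + 2 * τ * (t : ℝ) * f xs
            + 2 * τ * (t : ℝ) * ⟪f' (xh t), x (t + 1) - xs⟫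
            + 2 * τ * Lf * ‖x (t + 1) - x t‖ ^ 2 := by
        calc τ * (t : ℝ) * ((t : ℝ) + 1) * f (xb (t + 1))
            = τ * ((t : ℝ) * ((t : ℝ) + 1)) * f (xb (t + 1)) := by ring
          _ ≤ _ := hA'
          _ = _ := hmid
          _ ≤ _ := by linarith only [hlast]
      -- (I2) primal gradient step identity
      have hdv : Cv • (x t - x (t + 1))
          = (t : ℝ) • (f' (xh t) + (ContinuousLinearMap.adjoint A) (yh t)) := by
        rw [hx t ht, sub_sub_cancel, hη t, smul_smul]
        congr 1
        field_simp
      have hip : Cv * ⟪x t - x (t + 1), x (t + 1) - xs⟫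
          = (t : ℝ) * ⟪f' (xh t) + (ContinuousLinearMap.adjoint A) (yh t), x (t + 1) - xs⟫ := by
        rw [← real_inner_smul_left, ← real_inner_smul_left, hdv]
      have h3p := ldpd_three_point (x t) (x (t + 1)) xs
      rw [norm_sub_rev (x t) xs, norm_sub_rev (x (t + 1)) xs,
        norm_sub_rev (x t) (x (t + 1))] at h3p
      have hsp : ⟪f' (xh t) + (ContinuousLinearMap.adjoint A) (yh t), x (t + 1) - xs⟫
          = ⟪f' (xh t), x (t + 1) - xs⟫ + ⟪A (x (t + 1) - xs), yh t⟫ := by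
        rw [inner_add_left, ContinuousLinearMap.adjoint_inner_left,
          real_inner_comm (yh t)]
      have hyhe : ⟪A (x (t + 1) - xs), yh t⟫
          = α t * ⟪A (x (t + 1) - xs), y t - y (t - 1)⟫ + ⟪A (x (t + 1) - xs), y t⟫ := by
        rw [hyh t ht]
        simp [inner_add_right, real_inner_smul_right]
      have hαv : (t : ℝ) * α t = (t : ℝ) - 1 := by rw [hα]; field_simp
      have he := hip
      rw [hsp, hyhe] at he
      have I2 : 2 * τ * (t : ℝ) * ⟪f' (xh t), x (t + 1) - xs⟫
          = τ * Cv * (‖xs - x t‖ ^ 2 - ‖xs - x (t + 1)‖ ^ 2 - ‖x (t + 1) - x t‖ ^ 2)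
            - 2 * τ * (t : ℝ) * ⟪A (x (t + 1) - xs), y t⟫
            - 2 * τ * ((t : ℝ) - 1) * ⟪A (x (t + 1) - xs), y t - y (t - 1)⟫ := by
        linear_combination (-(2 * τ)) * he + τ * Cv * h3p
          - 2 * τ * ⟪A (x (t + 1) - xs), y t - y (t - 1)⟫ * hαv
      -- (I3/I4)
      have I3 := hdual t ht
      have I4 := hgavg t ht
      -- (E5/E6) linear averaging identities
      have e5a : ⟪A (xb (t + 1)), ys⟫
          = (1 - θ t) * ⟪A (xb t), ys⟫ + θ t * ⟪A (x (t + 1)), ys⟫ := by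
        rw [hxb t ht]
        simp [map_add, map_smul, inner_add_left, real_inner_smul_left]
      have E5 : τ * (t : ℝ) * ((t : ℝ) + 1) * ⟪A (xb (t + 1)), ys⟫
          = τ * (t : ℝ) * ((t : ℝ) - 1) * ⟪A (xb t), ys⟫
            + 2 * τ * (t : ℝ) * ⟪A (x (t + 1)), ys⟫ := by
        rw [e5a, hθt]; field_simp; ring
      have e6a : ⟪A xs, yb (t + 1)⟫
          = (1 - θ t) * ⟪A xs, yb t⟫ + θ t * ⟪A xs, y (t + 1)⟫ := by
        rw [hyb t ht]
        simp [inner_add_right, real_inner_smul_right]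
      have E6 : τ * (t : ℝ) * ((t : ℝ) + 1) * ⟪A xs, yb (t + 1)⟫
          = τ * (t : ℝ) * ((t : ℝ) - 1) * ⟪A xs, yb t⟫
            + 2 * τ * (t : ℝ) * ⟪A xs, y (t + 1)⟫ := by
        rw [e6a, hθt]; field_simp; ring
      -- (E7) inner product bookkeeping
      have E7 : 2 * τ * (t : ℝ) * (⟪A (x (t + 1)), ys⟫ - ⟪A xs, y (t + 1)⟫
            - ⟪A (x (t + 1) - xs), y t⟫ - ⟪A (x (t + 1)), ys - y (t + 1)⟫)
            - 2 * τ * ((t : ℝ) - 1) * ⟪A (x (t + 1) - xs), y t - y (t - 1)⟫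
          = 2 * τ * (t : ℝ) * ⟪A (x (t + 1) - xs), y (t + 1) - y t⟫
            - 2 * τ * ((t : ℝ) - 1) * ⟪A (x t - xs), y t - y (t - 1)⟫
            - 2 * τ * ((t : ℝ) - 1) * ⟪A (x (t + 1) - x t), y t - y (t - 1)⟫ := by
        simp only [map_sub, inner_sub_left, inner_sub_right]
        ring
      -- (E1) coefficient comparison
      have hb1 : (0:ℝ) ≤ ‖ys - y (t + 1)‖ ^ 2 := by positivity
      have E1 : ((t:ℝ) + 1) ^ 2 * ‖ys - y (t + 1)‖ ^ 2
          ≤ ((t:ℝ) ^ 2 + 3 * (t:ℝ)) * ‖ys - y (t + 1)‖ ^ 2 :=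
        mul_le_mul_of_nonneg_right (by nlinarith only [hT]) hb1
      -- (E2) Cauchy-Schwarz / AM-GM on the cross term
      have hcs := (ldpd_opnorm_inner A (x (t + 1) - x t) (y t - y (t - 1))).1
      have E2 : -(2 * τ * ((t:ℝ) - 1) * ⟪A (x (t + 1) - x t), y t - y (t - 1)⟫)
          ≤ τ ^ 2 * ‖A‖ ^ 2 * ‖x (t + 1) - x t‖ ^ 2
            + ((t:ℝ) - 1) ^ 2 * ‖y t - y (t - 1)‖ ^ 2 := by
        have hsq := sq_nonneg (τ * ‖A‖ * ‖x (t + 1) - x t‖ - ((t:ℝ) - 1) * ‖y t - y (t - 1)‖)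
        have hmul := mul_le_mul_of_nonneg_left hcs
          (show (0:ℝ) ≤ 2 * τ * ((t:ℝ) - 1) from
            mul_nonneg (by positivity) (by linarith only [hT]))
        linarith only [hmul, hsq]
      have E3 : τ * Cv * ‖x (t + 1) - x t‖ ^ 2
          = 2 * τ * Lf * ‖x (t + 1) - x t‖ ^ 2 + τ ^ 2 * ‖A‖ ^ 2 * ‖x (t + 1) - x t‖ ^ 2 := by
        rw [hCv]; ring
      -- combine in stages
      have I12 : τ * (t:ℝ) * ((t:ℝ) + 1) * f (xb (t + 1))
          ≤ τ * (t:ℝ) * ((t:ℝ) - 1) * f (xb t) + 2 * τ * (t:ℝ) * f xs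
            + τ * Cv * (‖xs - x t‖ ^ 2 - ‖xs - x (t + 1)‖ ^ 2 - ‖x (t + 1) - x t‖ ^ 2)
            - 2 * τ * (t:ℝ) * ⟪A (x (t + 1) - xs), y t⟫
            - 2 * τ * ((t:ℝ) - 1) * ⟪A (x (t + 1) - xs), y t - y (t - 1)⟫
            + 2 * τ * Lf * ‖x (t + 1) - x t‖ ^ 2 := by linarith only [I1, I2]
      have I31 : 2 * τ * (t:ℝ) * (g (y (t + 1)) - g ys)
          ≤ (t:ℝ) ^ 2 * ‖ys - y t‖ ^ 2 - (t:ℝ) ^ 2 * ‖y (t + 1) - y t‖ ^ 2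
            - ((t:ℝ) + 1) ^ 2 * ‖ys - y (t + 1)‖ ^ 2
            - 2 * τ * (t:ℝ) * ⟪A (x (t + 1)), ys - y (t + 1)⟫ := by linarith only [I3, E1]
      have I456 : τ * (t:ℝ) * ((t:ℝ) + 1) *
            (g (yb (t + 1)) - ⟪A xs, yb (t + 1)⟫ + ⟪A (xb (t + 1)), ys⟫)
          ≤ τ * (t:ℝ) * ((t:ℝ) - 1) * (g (yb t) - ⟪A xs, yb t⟫ + ⟪A (xb t), ys⟫)
            + 2 * τ * (t:ℝ) * (g (y (t + 1)) - ⟪A xs, y (t + 1)⟫ + ⟪A (x (t + 1)), ys⟫) := by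
        linarith only [I4, E5, E6]
      have hE27 : 2 * τ * (t:ℝ) * (⟪A (x (t + 1)), ys⟫ - ⟪A xs, y (t + 1)⟫
            - ⟪A (x (t + 1) - xs), y t⟫ - ⟪A (x (t + 1)), ys - y (t + 1)⟫)
            - 2 * τ * ((t:ℝ) - 1) * ⟪A (x (t + 1) - xs), y t - y (t - 1)⟫
            - 2 * τ * (t:ℝ) * ⟪A (x (t + 1) - xs), y (t + 1) - y t⟫
            + 2 * τ * ((t:ℝ) - 1) * ⟪A (x t - xs), y t - y (t - 1)⟫
          ≤ τ ^ 2 * ‖A‖ ^ 2 * ‖x (t + 1) - x t‖ ^ 2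
            + ((t:ℝ) - 1) ^ 2 * ‖y t - y (t - 1)‖ ^ 2 := by linarith only [E7, E2]
      simp only [hWf, Nat.add_sub_cancel]
      push_cast
      linarith only [I12, I31, I456, hE27, E3]
    have hbase := ldpd_mono_down Wf hstep (k + 1) (by omega)
    have hW1 : Wf 1 = τ * Cv * ‖xs - x 1‖ ^ 2 + ‖ys - y 1‖ ^ 2 := by
      simp [hWf]
    have hQlow : μg / 2 * ‖yb (k + 1) - ys‖ ^ 2
        ≤ f (xb (k + 1)) + ⟪A (xb (k + 1)), ys⟫ - g ys - f xs - ⟪A xs, yb (k + 1)⟫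
          + g (yb (k + 1)) := by
      have h1 := hsc (yb (k + 1))
      have h2 := (hsaddle (xb (k + 1)) ys).2
      rw [hL, hL] at h1
      rw [hL, hL] at h2
      linarith
    have hcs2 := (ldpd_opnorm_inner A (x (k + 1) - xs) (y (k + 1) - y k)).2
    rw [norm_sub_rev (x (k + 1)) xs] at hcs2
    have hdrop : (0:ℝ) ≤ τ * Cv * ‖xs - x (k + 1)‖ ^ 2
        + ((k:ℝ) + 1) ^ 2 * ‖ys - y (k + 1)‖ ^ 2 + (k:ℝ) ^ 2 * ‖y (k + 1) - y k‖ ^ 2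
        - 2 * τ * (k:ℝ) * ⟪A (x (k + 1) - xs), y (k + 1) - y k⟫ := by
      have hsq := sq_nonneg (τ * ‖A‖ * ‖xs - x (k + 1)‖ - (k:ℝ) * ‖y (k + 1) - y k‖)
      have hmul := mul_le_mul_of_nonneg_left hcs2
        (show (0:ℝ) ≤ 2 * τ * (k:ℝ) by positivity)
      have hE3 : τ * Cv * ‖xs - x (k + 1)‖ ^ 2 = 2 * τ * Lf * ‖xs - x (k + 1)‖ ^ 2
          + τ ^ 2 * ‖A‖ ^ 2 * ‖xs - x (k + 1)‖ ^ 2 := by rw [hCv]; ring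
      have hLfnn : (0:ℝ) ≤ 2 * τ * Lf * ‖xs - x (k + 1)‖ ^ 2 := by positivity
      have hbnn : (0:ℝ) ≤ ((k:ℝ) + 1) ^ 2 * ‖ys - y (k + 1)‖ ^ 2 := by positivity
      linarith only [hmul, hsq, hE3, hLfnn, hbnn]
    have hWk1 : Wf (k + 1) = τ * ((k:ℝ) + 1) * (k:ℝ) *
        (f (xb (k + 1)) + ⟪A (xb (k + 1)), ys⟫ - g ys - f xs - ⟪A xs, yb (k + 1)⟫
          + g (yb (k + 1)))
        + τ * Cv * ‖xs - x (k + 1)‖ ^ 2 + ((k:ℝ) + 1) ^ 2 * ‖ys - y (k + 1)‖ ^ 2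
        + (k:ℝ) ^ 2 * ‖y (k + 1) - y k‖ ^ 2
        - 2 * τ * (k:ℝ) * ⟪A (x (k + 1) - xs), y (k + 1) - y k⟫ := by
      simp only [hWf, Nat.add_sub_cancel]
      push_cast
      ring
    have hchain : τ * (k:ℝ) * ((k:ℝ) + 1) * (μg / 2 * ‖yb (k + 1) - ys‖ ^ 2)
        ≤ τ * Cv * ‖xs - x 1‖ ^ 2 + ‖ys - y 1‖ ^ 2 := by
      have hs1 := mul_le_mul_of_nonneg_left hQlow
        (show (0:ℝ) ≤ τ * (k:ℝ) * ((k:ℝ) + 1) by positivity)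
      rw [hWk1, hW1] at hbase
      ring_nf at hs1 hdrop hbase ⊢
      linarith only [hs1, hdrop, hbase]
    rw [div_mul_eq_mul_div, le_div_iff₀ hden]
    have hexp : 2 * (Cv * ‖xs - x 1‖ ^ 2 + ‖ys - y 1‖ ^ 2 / τ)
        = (2 / τ) * (τ * Cv * ‖xs - x 1‖ ^ 2 + ‖ys - y 1‖ ^ 2) := by
      field_simp
    have hexp2 : ‖yb (k + 1) - ys‖ ^ 2 * (μg * (k:ℝ) * ((k:ℝ) + 1))
        = (2 / τ) * (τ * (k:ℝ) * ((k:ℝ) + 1) * (μg / 2 * ‖yb (k + 1) - ys‖ ^ 2)) := by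
      field_simp
    rw [hexp, hexp2]
    exact mul_le_mul_of_nonneg_left hchain (by positivity)
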